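/- Let ε > 0, let T be a subgroup test over the finite set S with significance function s_T, let X ⊆ Y be finite nonempty sets, and let ρ : S → Sym(X) and φ : S → Sym(Y) be maps with d^{s_T}_edit(ρ, φ) ≤ ε. Then |val(T, Φ(ρ)) − val(T, Φ(φ))| ≤ ε. -/

import Mathlib

/-- A subgroup test over `S` with finite challenge index set `Q`: a probability
distribution `μ` on `Q`, and for each `i ∈ Q` a finite subset `K i ⊆ F(S)` with
a decision function `D i` (applied to `H ∩ K i`). -/
structure SubgroupTest (S Q : Type) [Fintype Q] where
  μ : Q → ℝ
  μ_nonneg : ∀ i, 0 ≤ μ i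
  μ_sum : ∑ i, μ i = 1
  K : Q → Finset (FreeGroup S)
  D : Q → Set (FreeGroup S) → Bool

/-- The value `val(T, Φ(ρ))` of the finitely described strategy `Φ(ρ)` induced by the
action `ρ : S → Sym(X)` against the test `T`: the probability, over a uniform `x ∈ X`
and `i ∼ μ`, that `D_i(Stab(ρ,x) ∩ K_i) = 1`. -/
noncomputable def testVal {S Q : Type} [Fintype Q] (T : SubgroupTest S Q)
    {X : Type} [Fintype X] (ρ : S → Equiv.Perm X) : ℝ :=
  (∑ x : X, ∑ i : Q, T.μ i *
      (if T.D i ({w : FreeGroup S | FreeGroup.lift ρ w x = x} ∩ ↑(T.K i)) then 1 else 0)) /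
    Fintype.card X

/-- The significance function `s_T` of a test `T`:
`s_T(s) = E_{i∼μ}[Σ_{w ∈ K_i} v_s(w)]`. -/
noncomputable def significance {S Q : Type} [DecidableEq S] [Fintype Q]
    (T : SubgroupTest S Q) (s : S) : ℝ :=
  ∑ i : Q, T.μ i * ∑ w ∈ T.K i, ((w.toWord.map Prod.fst).count s : ℝ)

/-- The `sig`-weighted edit distance between `ρ : S → Sym(X)` and `φ : S → Sym(Y)`,
where `X ⊆ Y` via the embedding `ι`:
`min_{θ ∈ Sym(Y)} Σ_s sig(s)·d_H(ρ(s), θ φ(s) θ⁻¹)`, with the generalized normalized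
Hamming distance `d_H(σ,τ) = 1 - |{x ∈ X : σ(x) = τ(x)}|/|Y|`. -/
noncomputable def weightedEditDist {S : Type} [Fintype S] (sig : S → ℝ)
    {X Y : Type} [Fintype X] [Fintype Y] (ι : X ↪ Y)
    (ρ : S → Equiv.Perm X) (φ : S → Equiv.Perm Y) : ℝ :=
  ⨅ θ : Equiv.Perm Y,
    ∑ s : S, sig s *
      (1 - (Nat.card {x : X // ι (ρ s x) = (θ * φ s * θ⁻¹) (ι x)} : ℝ) / Fintype.card Y)


open Finset

section Aux

variable {S : Type} [DecidableEq S]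

/-- The permutation obtained by multiplying out a word. -/
def listPerm {Z : Type} (ρ : S → Equiv.Perm Z) (L : List (S × Bool)) : Equiv.Perm Z :=
  (L.map fun p => cond p.2 (ρ p.1) (ρ p.1)⁻¹).prod

lemma lift_eq_listPerm {Z : Type} (ρ : S → Equiv.Perm Z) (w : FreeGroup S) :
    FreeGroup.lift ρ w = listPerm ρ w.toWord := by
  conv_lhs => rw [← FreeGroup.mk_toWord (x := w)]
  rw [FreeGroup.lift_mk]; rfl

lemma listPerm_cons {Z : Type} (ρ : S → Equiv.Perm Z) (p : S × Bool) (L : List (S × Bool))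
    (z : Z) : listPerm ρ (p :: L) z = (cond p.2 (ρ p.1) (ρ p.1)⁻¹) (listPerm ρ L z) := by
  simp [listPerm, Equiv.Perm.mul_apply]

lemma list_map_sum_eq [Fintype S] (f : S → ℝ) :
    ∀ M : List S, (M.map f).sum = ∑ s : S, (M.count s : ℝ) * f s := by
  intro M
  induction M with
  | nil => simp
  | cons a M ih =>
    simp only [List.map_cons, List.sum_cons, ih, List.count_cons, Nat.cast_add, Nat.cast_ite,
      Nat.cast_one, Nat.cast_zero, beq_iff_eq, add_mul, Finset.sum_add_distrib, ite_mul,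
      one_mul, zero_mul, Finset.sum_ite_eq', Finset.sum_ite_eq, Finset.mem_univ, if_true]
    ring

lemma card_filter_comp_perm {Z : Type} [Fintype Z] (π : Equiv.Perm Z) (Q : Z → Prop)
    [DecidablePred Q] : #(univ.filter fun z => Q (π z)) = #(univ.filter Q) :=
  Finset.card_equiv π (by simp)

end Aux
section Count

variable {S X Y : Type} [DecidableEq S] [Fintype X] [DecidableEq X] [Fintype Y] [DecidableEq Y]
variable (ι : X ↪ Y) (ρ : S → Equiv.Perm X) (ψ : S → Equiv.Perm Y)

lemma step_card (s : S) (b : Bool) :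
    (#(univ.filter fun z : X =>
        ¬ ι ((cond b (ρ s) (ρ s)⁻¹) z) = (cond b (ψ s) (ψ s)⁻¹) (ι z)) : ℝ)
      = (Fintype.card X : ℝ) - #(univ.filter fun x : X => ι (ρ s x) = ψ s (ι x)) := by
  have hbase : (#(univ.filter fun z : X => ¬ ι (ρ s z) = ψ s (ι z)) : ℝ)
      = (Fintype.card X : ℝ) - #(univ.filter fun x : X => ι (ρ s x) = ψ s (ι x)) := by
    rw [Finset.filter_not, Finset.card_sdiff_of_subset (Finset.filter_subset _ _), Finset.card_univ]
    rw [Nat.cast_sub (le_trans (Finset.card_filter_le _ _) (le_of_eq Finset.card_univ))]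
  cases b
  · have hcard : #(univ.filter fun z : X => ¬ ι ((ρ s)⁻¹ z) = (ψ s)⁻¹ (ι z))
        = #(univ.filter fun z : X => ¬ ι (ρ s z) = ψ s (ι z)) := by
      apply Finset.card_equiv ((ρ s)⁻¹ : Equiv.Perm X)
      intro z
      simp only [Finset.mem_filter, Finset.mem_univ, true_and, Equiv.Perm.inv_def, Equiv.apply_symm_apply]
      constructor
      · intro h h'
        apply h
        rw [h', Equiv.symm_apply_apply]
      · intro h h'
        apply h
        rw [h', Equiv.apply_symm_apply]
    simp only [cond_false]; rw [hcard]; exact hbase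
  · simpa using hbase

lemma badcount (L : List (S × Bool)) :
    ((#(univ.filter fun x : X => ¬ ι (listPerm ρ L x) = listPerm ψ L (ι x)) : ℕ) : ℝ)
      ≤ (L.map fun p => (Fintype.card X : ℝ)
          - #(univ.filter fun x : X => ι (ρ p.1 x) = ψ p.1 (ι x))).sum := by
  induction L with
  | nil => simp [listPerm]
  | cons p L ih =>
    have hsub : (univ.filter fun x : X => ¬ ι (listPerm ρ (p :: L) x) = listPerm ψ (p :: L) (ι x))
        ⊆ (univ.filter fun x : X => ¬ ι (listPerm ρ L x) = listPerm ψ L (ι x))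
          ∪ (univ.filter fun x : X =>
              ¬ ι ((cond p.2 (ρ p.1) (ρ p.1)⁻¹) (listPerm ρ L x))
                = (cond p.2 (ψ p.1) (ψ p.1)⁻¹) (ι (listPerm ρ L x))) := by
      intro x hx
      simp only [Finset.mem_filter, Finset.mem_univ, true_and, Finset.mem_union] at hx ⊢
      by_contra hcon
      push_neg at hcon
      obtain ⟨h1, h2⟩ := hcon
      apply hx
      rw [listPerm_cons, listPerm_cons, h2, h1]
    have hstep : (#(univ.filter fun x : X =>
        ¬ ι ((cond p.2 (ρ p.1) (ρ p.1)⁻¹) (listPerm ρ L x))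
          = (cond p.2 (ψ p.1) (ψ p.1)⁻¹) (ι (listPerm ρ L x))) : ℝ)
        = (Fintype.card X : ℝ) - #(univ.filter fun x : X => ι (ρ p.1 x) = ψ p.1 (ι x)) := by
      rw [card_filter_comp_perm (listPerm ρ L)
        (fun z => ¬ ι ((cond p.2 (ρ p.1) (ρ p.1)⁻¹) z) = (cond p.2 (ψ p.1) (ψ p.1)⁻¹) (ι z))]
      exact step_card ι ρ ψ p.1 p.2
    calc ((#(univ.filter fun x : X => ¬ ι (listPerm ρ (p :: L) x) = listPerm ψ (p :: L) (ι x)) : ℕ) : ℝ)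
        ≤ ((#((univ.filter fun x : X => ¬ ι (listPerm ρ L x) = listPerm ψ L (ι x))
            ∪ (univ.filter fun x : X =>
              ¬ ι ((cond p.2 (ρ p.1) (ρ p.1)⁻¹) (listPerm ρ L x))
                = (cond p.2 (ψ p.1) (ψ p.1)⁻¹) (ι (listPerm ρ L x)))) : ℕ) : ℝ) := by
          exact_mod_cast Nat.cast_le.mpr (Finset.card_le_card hsub)
      _ ≤ ((#(univ.filter fun x : X => ¬ ι (listPerm ρ L x) = listPerm ψ L (ι x)) : ℕ) : ℝ)
            + #(univ.filter fun x : X =>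
              ¬ ι ((cond p.2 (ρ p.1) (ρ p.1)⁻¹) (listPerm ρ L x))
                = (cond p.2 (ψ p.1) (ψ p.1)⁻¹) (ι (listPerm ρ L x))) := by
          exact_mod_cast Finset.card_union_le _ _
      _ ≤ ((p :: L).map fun p => (Fintype.card X : ℝ)
          - #(univ.filter fun x : X => ι (ρ p.1 x) = ψ p.1 (ι x))).sum := by
          rw [List.map_cons, List.sum_cons, hstep]
          linarith [ih]

end Count
section Transfer

lemma transfer {X Y : Type} [Fintype X] [Fintype Y] [DecidableEq Y] [Nonempty X] [Nonempty Y]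
    (ι : X ↪ Y) (a : X → ℝ) (b : Y → ℝ)
    (ha0 : ∀ x, 0 ≤ a x) (ha1 : ∀ x, a x ≤ 1) (hb0 : ∀ y, 0 ≤ b y) (hb1 : ∀ y, b y ≤ 1) :
    |(∑ x, a x) / Fintype.card X - (∑ y, b y) / Fintype.card Y| ≤
      (1 - (Fintype.card X : ℝ) / Fintype.card Y)
        + (∑ x, |a x - b (ι x)|) / Fintype.card Y := by
  have hn : (0:ℝ) < Fintype.card X := by exact_mod_cast Fintype.card_pos
  have hm : (0:ℝ) < Fintype.card Y := by exact_mod_cast Fintype.card_pos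
  have hnm : (Fintype.card X : ℝ) ≤ Fintype.card Y := by
    exact_mod_cast Fintype.card_le_of_embedding ι
  set n : ℝ := (Fintype.card X : ℝ)
  set m : ℝ := (Fintype.card Y : ℝ)
  set A : ℝ := ∑ x, a x with hA
  set B : ℝ := ∑ y, b y with hB
  set Sb : ℝ := ∑ x, b (ι x) with hSb
  set E : ℝ := ∑ x, |a x - b (ι x)| with hE
  have hA0 : 0 ≤ A := Finset.sum_nonneg fun x _ => ha0 x
  have hA1 : A ≤ n := by
    calc A ≤ ∑ _x : X, (1:ℝ) := Finset.sum_le_sum fun x _ => ha1 x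
    _ = n := by simp [n]
  have hErr : |A - Sb| ≤ E := by
    rw [hA, hSb, ← Finset.sum_sub_distrib]
    exact Finset.abs_sum_le_sum_abs _ _
  have hmap : Sb = ∑ y ∈ Finset.univ.map ι, b y := by
    rw [Finset.sum_map]
  have hBS0 : Sb ≤ B := by
    rw [hmap, hB]
    exact Finset.sum_le_sum_of_subset_of_nonneg (Finset.subset_univ _) fun y _ _ => hb0 y
  have hBS1 : B - Sb ≤ m - n := by
    rw [hmap, hB, ← Finset.sum_sdiff (Finset.subset_univ (Finset.univ.map ι))]
    have : ∑ y ∈ (Finset.univ \ Finset.univ.map ι), b y ≤ m - n := by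
      calc ∑ y ∈ (Finset.univ \ Finset.univ.map ι), b y
          ≤ ∑ _y ∈ (Finset.univ \ Finset.univ.map ι), (1:ℝ) :=
            Finset.sum_le_sum fun y _ => hb1 y
        _ = ((Finset.univ \ Finset.univ.map ι).card : ℝ) := by simp
        _ = m - n := by
            rw [Finset.card_sdiff_of_subset (Finset.subset_univ _), Finset.card_univ, Finset.card_map,
              Finset.card_univ]
            rw [Nat.cast_sub (Fintype.card_le_of_embedding ι)]
    linarith
  have hE0 : 0 ≤ E := Finset.sum_nonneg fun x _ => abs_nonneg _
  have e1 : A / n - B / m = A * (1/n - 1/m) + (A - Sb)/m - (B - Sb)/m := by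
    field_simp
    ring
  have t1a : 0 ≤ A * (1/n - 1/m) := by
    apply mul_nonneg hA0
    have : 1/m ≤ 1/n := by apply one_div_le_one_div_of_le hn hnm
    linarith
  have t1b : A * (1/n - 1/m) ≤ 1 - n/m := by
    have h1 : A * (1/n - 1/m) ≤ n * (1/n - 1/m) := by
      apply mul_le_mul_of_nonneg_right hA1
      have : 1/m ≤ 1/n := by apply one_div_le_one_div_of_le hn hnm
      linarith
    have h2 : n * (1/n - 1/m) = 1 - n/m := by field_simp
    linarith
  have t2 := abs_le.mp hErr
  have t3a : 0 ≤ (B - Sb)/m := div_nonneg (by linarith) hm.le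
  have t3b : (B - Sb)/m ≤ 1 - n/m := by
    rw [div_le_iff₀ hm]
    have : (1 - n/m) * m = m - n := by field_simp
    linarith
  have hupper : (A - Sb)/m <= E/m := (div_le_div_iff_of_pos_right hm).mpr t2.2
  have hlower : -(E/m) <= (A - Sb)/m := by
    rw [← neg_div]
    exact (div_le_div_iff_of_pos_right hm).mpr t2.1
  rw [abs_le]
  constructor <;> [skip; skip] <;> linarith

end Transfer
section Conj

lemma testVal_conj {S Q : Type} [Fintype Q] (T : SubgroupTest S Q) {Y : Type} [Fintype Y]
    (φ : S → Equiv.Perm Y) (θ : Equiv.Perm Y) :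
    testVal T (fun s => θ * φ s * θ⁻¹) = testVal T φ := by
  have hl : ∀ w : FreeGroup S,
      FreeGroup.lift (fun s => θ * φ s * θ⁻¹) w = θ * FreeGroup.lift φ w * θ⁻¹ := by
    have h2 : (FreeGroup.lift (fun s => θ * φ s * θ⁻¹) : FreeGroup S →* Equiv.Perm Y)
        = ((MulAut.conj θ).toMonoidHom.comp (FreeGroup.lift φ)) := by
      apply FreeGroup.ext_hom
      intro s
      simp [MulAut.conj_apply]
    intro w
    rw [h2]
    rfl
  have hset : ∀ y : Y, ∀ i : Q,
      ({w : FreeGroup S | FreeGroup.lift (fun s => θ * φ s * θ⁻¹) w y = y} ∩ ↑(T.K i))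
        = ({w : FreeGroup S | FreeGroup.lift φ w (θ⁻¹ y) = θ⁻¹ y} ∩ ↑(T.K i)) := by
    intro y i
    ext w
    simp only [Set.mem_inter_iff, Set.mem_setOf_eq, hl, Equiv.Perm.mul_apply]
    constructor
    · rintro ⟨h1, h2⟩
      refine ⟨?_, h2⟩
      conv_rhs => rw [← h1]
      simp
    · rintro ⟨h1, h2⟩
      refine ⟨?_, h2⟩
      rw [h1]
      simp
  unfold testVal
  congr 1
  have : ∀ y : Y, (∑ i : Q, T.μ i *
      (if T.D i ({w : FreeGroup S | FreeGroup.lift (fun s => θ * φ s * θ⁻¹) w y = y} ∩ ↑(T.K i))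
        then (1:ℝ) else 0))
      = ∑ i : Q, T.μ i *
      (if T.D i ({w : FreeGroup S | FreeGroup.lift φ w ((θ⁻¹ : Equiv.Perm Y) y) = (θ⁻¹ : Equiv.Perm Y) y} ∩ ↑(T.K i))
        then (1:ℝ) else 0) := by
    intro y
    apply Finset.sum_congr rfl
    intro i _
    rw [hset y i]
  rw [Finset.sum_congr rfl fun y _ => this y]
  exact Equiv.sum_comp (θ⁻¹ : Equiv.Perm Y) (fun z => ∑ i : Q, T.μ i *
      (if T.D i ({w : FreeGroup S | FreeGroup.lift φ w z = z} ∩ ↑(T.K i)) then (1:ℝ) else 0))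

end Conj
section Core

lemma core_bound {S Q : Type} [Fintype S] [DecidableEq S] [Fintype Q]
    (T : SubgroupTest S Q) {X Y : Type} [Fintype X] [DecidableEq X] [Fintype Y] [DecidableEq Y]
    [Nonempty X] [Nonempty Y]
    (ι : X ↪ Y) (ρ : S → Equiv.Perm X) (ψ : S → Equiv.Perm Y) :
    |testVal T ρ - testVal T ψ| ≤
      ∑ s : S, significance T s *
        (1 - (Nat.card {x : X // ι (ρ s x) = ψ s (ι x)} : ℝ) / Fintype.card Y) := by
  have hn : (0:ℝ) < (Fintype.card X : ℝ) := by exact_mod_cast Fintype.card_pos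
  have hm : (0:ℝ) < (Fintype.card Y : ℝ) := by exact_mod_cast Fintype.card_pos
  have hnm : ((Fintype.card X : ℝ)) ≤ (Fintype.card Y : ℝ) := by
    exact_mod_cast Fintype.card_le_of_embedding ι
  set g : S → ℝ := fun s => (#(Finset.univ.filter fun x : X => ι (ρ s x) = ψ s (ι x)) : ℝ)
    with hg_def
  have hNat : ∀ s : S, (Nat.card {x : X // ι (ρ s x) = ψ s (ι x)} : ℝ) = g s := by
    intro s
    rw [Nat.card_eq_fintype_card, Fintype.card_subtype, hg_def]
  set c : S → ℝ := fun s => 1 - g s / (Fintype.card Y : ℝ) with hc_def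
  have hg_le : ∀ s, g s ≤ (Fintype.card X : ℝ) := by
    intro s
    rw [hg_def]
    dsimp only
    have := Finset.card_filter_le (Finset.univ : Finset X) (fun x => ι (ρ s x) = ψ s (ι x))
    rw [Finset.card_univ] at this
    exact_mod_cast this
  have hc0 : ∀ s, 0 ≤ c s := by
    intro s
    rw [hc_def]
    have h1 : g s / (Fintype.card Y : ℝ) ≤ 1 := by
      rw [div_le_one hm]
      linarith [hg_le s]
    dsimp only
    linarith
  set a : Q → X → ℝ := fun i x =>
    if T.D i ({w : FreeGroup S | FreeGroup.lift ρ w x = x} ∩ ↑(T.K i)) then 1 else 0 with ha_def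
  set b : Q → Y → ℝ := fun i y =>
    if T.D i ({w : FreeGroup S | FreeGroup.lift ψ w y = y} ∩ ↑(T.K i)) then 1 else 0 with hb_def
  have ha0 : ∀ i x, 0 ≤ a i x := by
    intro i x; rw [ha_def]; dsimp only; split <;> norm_num
  have ha1 : ∀ i x, a i x ≤ 1 := by
    intro i x; rw [ha_def]; dsimp only; split <;> norm_num
  have hb0 : ∀ i y, 0 ≤ b i y := by
    intro i y; rw [hb_def]; dsimp only; split <;> norm_num
  have hb1 : ∀ i y, b i y ≤ 1 := by
    intro i y; rw [hb_def]; dsimp only; split <;> norm_num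
  set v : S → FreeGroup S → ℝ := fun s w => ((w.toWord.map Prod.fst).count s : ℝ) with hv_def
  have hv0 : ∀ s w, 0 ≤ v s w := by
    intro s w; rw [hv_def]; positivity
  set R : Q → ℝ := fun i => ∑ w ∈ T.K i, ∑ s : S, v s w * c s with hR_def
  have hval1 : testVal T ρ = ∑ i : Q, T.μ i * ((∑ x : X, a i x) / (Fintype.card X : ℝ)) := by
    simp only [testVal, ha_def]
    rw [Finset.sum_comm, Finset.sum_div]
    exact Finset.sum_congr rfl fun i _ => by rw [← Finset.mul_sum, mul_div_assoc]
  have hval2 : testVal T ψ = ∑ i : Q, T.μ i * ((∑ y : Y, b i y) / (Fintype.card Y : ℝ)) := by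
    simp only [testVal, hb_def]
    rw [Finset.sum_comm, Finset.sum_div]
    exact Finset.sum_congr rfl fun i _ => by rw [← Finset.mul_sum, mul_div_assoc]
  have hper : ∀ i : Q,
      |(∑ x : X, a i x) / (Fintype.card X : ℝ) - (∑ y : Y, b i y) / (Fintype.card Y : ℝ)|
        ≤ R i := by
    intro i
    have hR0 : 0 ≤ R i := by
      rw [hR_def]
      exact Finset.sum_nonneg fun w _ => Finset.sum_nonneg fun s _ =>
        mul_nonneg (hv0 s w) (hc0 s)
    by_cases hK : ∀ w ∈ T.K i, w = (1 : FreeGroup S)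
    · have hax : ∀ x : X, a i x = (if T.D i ↑(T.K i) then (1:ℝ) else 0) := by
        intro x
        rw [ha_def]
        dsimp only
        have hseteq : {w : FreeGroup S | FreeGroup.lift ρ w x = x} ∩ ↑(T.K i) = ↑(T.K i) := by
          apply Set.inter_eq_right.mpr
          intro w hw
          have hw1 := hK w (Finset.mem_coe.mp hw)
          subst hw1
          simp
        rw [hseteq]
      have hby : ∀ y : Y, b i y = (if T.D i ↑(T.K i) then (1:ℝ) else 0) := by
        intro y
        rw [hb_def]
        dsimp only
        have hseteq : {w : FreeGroup S | FreeGroup.lift ψ w y = y} ∩ ↑(T.K i) = ↑(T.K i) := by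
          apply Set.inter_eq_right.mpr
          intro w hw
          have hw1 := hK w (Finset.mem_coe.mp hw)
          subst hw1
          simp
        rw [hseteq]
      have hsa : ∑ x : X, a i x = (Fintype.card X : ℝ) * (if T.D i ↑(T.K i) then (1:ℝ) else 0) := by
        rw [Finset.sum_congr rfl fun x _ => hax x, Finset.sum_const, Finset.card_univ,
          nsmul_eq_mul]
      have hsb : ∑ y : Y, b i y = (Fintype.card Y : ℝ) * (if T.D i ↑(T.K i) then (1:ℝ) else 0) := by
        rw [Finset.sum_congr rfl fun y _ => hby y, Finset.sum_const, Finset.card_univ,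
          nsmul_eq_mul]
      rw [hsa, hsb, mul_div_cancel_left₀ _ hn.ne', mul_div_cancel_left₀ _ hm.ne', sub_self,
        abs_zero]
      exact hR0
    · push_neg at hK
      obtain ⟨w₀, hw₀mem, hw₀⟩ := hK
      have htr := transfer ι (a i) (b i) (ha0 i) (ha1 i) (hb0 i) (hb1 i)
      have hpoint : ∀ x : X, |a i x - b i (ι x)| ≤ ∑ w ∈ T.K i,
          (if ι (FreeGroup.lift ρ w x) = FreeGroup.lift ψ w (ι x) then (0:ℝ) else 1) := by
        intro x
        by_cases hall : ∀ w ∈ T.K i, ι (FreeGroup.lift ρ w x) = FreeGroup.lift ψ w (ι x)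
        · have hab : a i x = b i (ι x) := by
            rw [ha_def, hb_def]
            dsimp only
            have hseteq : {w : FreeGroup S | FreeGroup.lift ρ w x = x} ∩ ↑(T.K i)
                = {w : FreeGroup S | FreeGroup.lift ψ w (ι x) = ι x} ∩ ↑(T.K i) := by
              ext w
              simp only [Set.mem_inter_iff, Set.mem_setOf_eq, Finset.mem_coe]
              constructor
              · rintro ⟨h1, h2⟩
                exact ⟨by rw [← hall w h2, h1], h2⟩
              · rintro ⟨h1, h2⟩
                exact ⟨ι.injective (by rw [hall w h2, h1]), h2⟩
            rw [hseteq]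
          rw [hab, sub_self, abs_zero]
          exact Finset.sum_nonneg fun w _ => by split <;> norm_num
        · push_neg at hall
          obtain ⟨w, hwmem, hwne⟩ := hall
          have h1 : |a i x - b i (ι x)| ≤ 1 := by
            rw [ha_def, hb_def]
            dsimp only
            split <;> split <;> norm_num
          have h2 : (1:ℝ) ≤ ∑ w ∈ T.K i,
              (if ι (FreeGroup.lift ρ w x) = FreeGroup.lift ψ w (ι x) then (0:ℝ) else 1) := by
            have := Finset.single_le_sum
              (f := fun w => (if ι (FreeGroup.lift ρ w x) = FreeGroup.lift ψ w (ι x)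
                then (0:ℝ) else 1))
              (fun w _ => by split <;> norm_num) hwmem
            rw [if_neg hwne] at this
            exact this
          linarith
      have hEb : (∑ x : X, |a i x - b i (ι x)|)
          ≤ ∑ w ∈ T.K i, ∑ s : S, v s w * ((Fintype.card X : ℝ) - g s) := by
        calc (∑ x : X, |a i x - b i (ι x)|)
            ≤ ∑ x : X, ∑ w ∈ T.K i,
              (if ι (FreeGroup.lift ρ w x) = FreeGroup.lift ψ w (ι x) then (0:ℝ) else 1) :=
              Finset.sum_le_sum fun x _ => hpoint x
          _ = ∑ w ∈ T.K i, ∑ x : X,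
              (if ι (FreeGroup.lift ρ w x) = FreeGroup.lift ψ w (ι x) then (0:ℝ) else 1) :=
              Finset.sum_comm
          _ ≤ ∑ w ∈ T.K i, ∑ s : S, v s w * ((Fintype.card X : ℝ) - g s) := by
              apply Finset.sum_le_sum
              intro w _
              have hptw : ∀ x : X,
                  (if ι (FreeGroup.lift ρ w x) = FreeGroup.lift ψ w (ι x) then (0:ℝ) else 1)
                  = (if ¬ ι (listPerm ρ w.toWord x) = listPerm ψ w.toWord (ι x)
                      then (1:ℝ) else 0) := by
                intro x
                rw [← lift_eq_listPerm, ← lift_eq_listPerm, ite_not]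
              rw [Finset.sum_congr rfl fun x _ => hptw x, Finset.sum_boole]
              calc ((#(Finset.univ.filter fun x : X =>
                    ¬ ι (listPerm ρ w.toWord x) = listPerm ψ w.toWord (ι x)) : ℕ) : ℝ)
                  ≤ (w.toWord.map fun p => (Fintype.card X : ℝ)
                      - #(Finset.univ.filter fun x : X => ι (ρ p.1 x) = ψ p.1 (ι x))).sum :=
                    badcount ι ρ ψ w.toWord
                _ = ∑ s : S, v s w * ((Fintype.card X : ℝ) - g s) := by
                    have hmm2 : (w.toWord.map fun p => (Fintype.card X : ℝ)
                        - #(Finset.univ.filter fun x : X => ι (ρ p.1 x) = ψ p.1 (ι x)))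
                      = ((w.toWord.map Prod.fst).map fun s => (Fintype.card X : ℝ)
                        - #(Finset.univ.filter fun x : X => ι (ρ s x) = ψ s (ι x))) := by
                      rw [List.map_map]
                      rfl
                    rw [hmm2, list_map_sum_eq]
      have hsplit : R i = (∑ w ∈ T.K i, ∑ s : S, v s w) * (1 - (Fintype.card X : ℝ)/(Fintype.card Y : ℝ))
          + (∑ w ∈ T.K i, ∑ s : S, v s w * ((Fintype.card X : ℝ) - g s)) / (Fintype.card Y : ℝ) := by
        rw [hR_def]
        dsimp only
        rw [Finset.sum_mul, Finset.sum_div, ← Finset.sum_add_distrib]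
        apply Finset.sum_congr rfl
        intro w _
        rw [Finset.sum_mul, Finset.sum_div, ← Finset.sum_add_distrib]
        apply Finset.sum_congr rfl
        intro s _
        rw [hc_def]
        dsimp only
        field_simp
        ring
      have hlen1 : (1:ℝ) ≤ ∑ w ∈ T.K i, ∑ s : S, v s w := by
        have hw0len : (1:ℝ) ≤ ∑ s : S, v s w₀ := by
          have hlist : ∑ s : S, v s w₀ = ((w₀.toWord.map Prod.fst).map fun _ => (1:ℝ)).sum := by
            rw [list_map_sum_eq]
            exact Finset.sum_congr rfl fun s _ => by simp only [hv_def, mul_one]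
          have hne : w₀.toWord ≠ [] := by
            rw [ne_eq, FreeGroup.toWord_eq_nil_iff]
            exact hw₀
          have hlp : 0 < w₀.toWord.length := List.length_pos_iff.mpr hne
          rw [hlist, List.map_const', List.sum_replicate, List.length_map, nsmul_eq_mul, mul_one]
          exact_mod_cast hlp
        calc (1:ℝ) ≤ ∑ s : S, v s w₀ := hw0len
          _ ≤ ∑ w ∈ T.K i, ∑ s : S, v s w :=
            Finset.single_le_sum (fun w _ => Finset.sum_nonneg fun s _ => hv0 s w) hw₀mem
      have h1nm : (0:ℝ) ≤ 1 - (Fintype.card X : ℝ)/(Fintype.card Y : ℝ) := by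
        have : (Fintype.card X : ℝ)/(Fintype.card Y : ℝ) ≤ 1 := by
          rw [div_le_one hm]; exact hnm
        linarith
      have hRlow : (1 - (Fintype.card X : ℝ)/(Fintype.card Y : ℝ))
          + (∑ x : X, |a i x - b i (ι x)|) / (Fintype.card Y : ℝ) ≤ R i := by
        rw [hsplit]
        have hA := le_mul_of_one_le_left h1nm hlen1
        have hB := (div_le_div_iff_of_pos_right hm).mpr hEb
        linarith
      exact htr.trans hRlow
  have hswap : ∑ i : Q, T.μ i * R i = ∑ s : S, significance T s * c s := by
    simp only [hR_def, significance, hv_def]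
    calc ∑ i : Q, T.μ i * (∑ w ∈ T.K i, ∑ s : S, ((w.toWord.map Prod.fst).count s : ℝ) * c s)
        = ∑ i : Q, ∑ w ∈ T.K i, ∑ s : S, T.μ i * (((w.toWord.map Prod.fst).count s : ℝ) * c s) := by
          simp only [Finset.mul_sum]
      _ = ∑ i : Q, ∑ s : S, ∑ w ∈ T.K i, T.μ i * (((w.toWord.map Prod.fst).count s : ℝ) * c s) :=
          Finset.sum_congr rfl fun i _ => Finset.sum_comm
      _ = ∑ s : S, ∑ i : Q, ∑ w ∈ T.K i, T.μ i * (((w.toWord.map Prod.fst).count s : ℝ) * c s) :=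
          Finset.sum_comm
      _ = ∑ s : S, (∑ i : Q, T.μ i * ∑ w ∈ T.K i, ((w.toWord.map Prod.fst).count s : ℝ)) * c s := by
          apply Finset.sum_congr rfl
          intro s _
          rw [Finset.sum_mul]
          apply Finset.sum_congr rfl
          intro i _
          rw [Finset.mul_sum, Finset.sum_mul]
          exact Finset.sum_congr rfl fun w _ => by ring
  calc |testVal T ρ - testVal T ψ|
      = |∑ i : Q, T.μ i * ((∑ x : X, a i x) / (Fintype.card X : ℝ)
          - (∑ y : Y, b i y) / (Fintype.card Y : ℝ))| := by
        rw [hval1, hval2, ← Finset.sum_sub_distrib]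
        congr 1
        exact Finset.sum_congr rfl fun i _ => (mul_sub _ _ _).symm
    _ ≤ ∑ i : Q, |T.μ i * ((∑ x : X, a i x) / (Fintype.card X : ℝ)
          - (∑ y : Y, b i y) / (Fintype.card Y : ℝ))| := Finset.abs_sum_le_sum_abs _ _
    _ ≤ ∑ i : Q, T.μ i * R i := by
        apply Finset.sum_le_sum
        intro i _
        rw [abs_mul, abs_of_nonneg (T.μ_nonneg i)]
        exact mul_le_mul_of_nonneg_left (hper i) (T.μ_nonneg i)
    _ = ∑ s : S, significance T s * c s := hswap
    _ = ∑ s : S, significance T s *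
        (1 - (Nat.card {x : X // ι (ρ s x) = ψ s (ι x)} : ℝ) / Fintype.card Y) := by
        apply Finset.sum_congr rfl
        intro s _
        rw [hNat s, hc_def]

end Core
/-- If two finite strategies are at `s_T`-weighted edit distance at most `ε`, then their
values against the test `T` differ by at most `ε`. -/
theorem testVal_close_of_editDist_le {S Q : Type} [Fintype S] [DecidableEq S] [Fintype Q]
    (T : SubgroupTest S Q) (X Y : Type) [Fintype X] [Fintype Y] [Nonempty X] [Nonempty Y]
    (ι : X ↪ Y) (ρ : S → Equiv.Perm X) (φ : S → Equiv.Perm Y)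
    (ε : ℝ) (hε : 0 < ε)
    (h : weightedEditDist (significance T) ι ρ φ ≤ ε) :
    |testVal T ρ - testVal T φ| ≤ ε := by
  classical
  have hkey : ∀ θ : Equiv.Perm Y, |testVal T ρ - testVal T φ| ≤
      ∑ s : S, significance T s *
        (1 - (Nat.card {x : X // ι (ρ s x) = (θ * φ s * θ⁻¹) (ι x)} : ℝ) / Fintype.card Y) := by
    intro θ
    rw [← testVal_conj T φ θ]
    exact core_bound T ι ρ (fun s => θ * φ s * θ⁻¹)
  have hinf : |testVal T ρ - testVal T φ| ≤ weightedEditDist (significance T) ι ρ φ := by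
    unfold weightedEditDist
    exact le_ciInf hkey
  linarith
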